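/- Suppose ε ∈ (0,ρ) and η ∈ (0,1] are such that for every x, y ∈ B̄(a,ρ), μ({z : infDist(z, segment [x,y]) < ε}) ≤ 1 − η, and set τ = ε²·η/(32·ρ³). Then for all x, y ∈ B̄(a,ρ) and all t ∈ [0,1]: f(x + t·(y − x)) ≥ f(x) + t·(⟨y − x, H(x)⟩ + μ({x})·‖y − x‖) + τ·t²·‖y − x‖². Consequently f is τ-convex on B̄(a,ρ): the function x ↦ f(x) − τ·‖x‖² is convex on B̄(a,ρ). -/

import Mathlib

set_option maxHeartbeats 1000000

open MeasureTheory Metric Set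
open scoped RealInnerProductSpace ENNReal NNReal

lemma aux_compl_null {X : Type*} [TopologicalSpace X] [SecondCountableTopology X]
    [MeasurableSpace X] [OpensMeasurableSpace X] (μ : Measure X) {s : Set X}
    (h : {x | ∀ U ∈ nhds x, 0 < μ U} ⊆ s) : μ sᶜ = 0 := by
  set T := {U : Set X | IsOpen U ∧ μ U = 0} with hT
  obtain ⟨T', hT'c, hT'T, hUU⟩ := TopologicalSpace.isOpen_sUnion_countable T (fun u hu => hu.1)
  have hnull : μ (⋃₀ T) = 0 := by
    rw [← hUU]; exact (measure_sUnion_null_iff hT'c).2 fun s hs => (hT'T hs).2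
  refine measure_mono_null ?_ hnull
  intro z hz
  have hz' : z ∉ {x | ∀ U ∈ nhds x, 0 < μ U} := fun hmem => hz (h hmem)
  simp only [mem_setOf_eq, not_forall] at hz'
  obtain ⟨U, hU, hU0⟩ := hz'
  obtain ⟨V, hVU, hVopen, hzV⟩ := mem_nhds_iff.1 hU
  refine ⟨V, ⟨hVopen, measure_mono_null hVU ?_⟩, hzV⟩
  simpa using hU0

lemma aux_mem_chord {E : Type*} [AddCommGroup E] [Module ℝ E] {c w : E} {r σ : ℝ}
    (hσ : |σ| ≤ r) : c + σ • w ∈ segment ℝ (c - r • w) (c + r • w) := by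
  rcases eq_or_lt_of_le ((abs_nonneg σ).trans hσ) with hr | hr
  · have hσ0 : σ = 0 := by
      have h2 := hσ; rw [← hr] at h2
      simpa using le_antisymm h2 (abs_nonneg σ)
    rw [hσ0, ← hr]
    simpa using left_mem_segment ℝ (c : E) c
  · have ha := (abs_le.1 hσ).1
    have hb := (abs_le.1 hσ).2
    have h1 : (0:ℝ) ≤ (r - σ) / (2 * r) := by
      apply div_nonneg <;> linarith
    have h2 : (0:ℝ) ≤ (r + σ) / (2 * r) := by
      apply div_nonneg <;> linarith
    refine ⟨(r - σ) / (2 * r), (r + σ) / (2 * r), h1, h2, by field_simp; ring, ?_⟩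
    match_scalars <;> field_simp <;> ring

lemma aux_orth {E : Type*} [NormedAddCommGroup E] [InnerProductSpace ℝ E]
    {w z : E} (hw : ‖w‖ = 1) (hz : ⟪w, z⟫ = 0) (k : ℝ) :
    ‖k • w + z‖ ^ 2 = k ^ 2 + ‖z‖ ^ 2 := by
  rw [norm_add_sq_real, real_inner_smul_left, hz, norm_smul, hw]
  simp [mul_pow, sq_abs]

lemma aux_sine {E : Type*} [NormedAddCommGroup E] [InnerProductSpace ℝ E]
    {a c w q x : E} {ρ ε r σ₀ : ℝ}
    (hρ : 0 < ρ) (hε : 0 < ε) (hερ : ε ≤ ρ) (hw : ‖w‖ = 1)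
    (hm : ⟪w, a - c⟫ = 0)
    (hr0 : 0 ≤ r) (hr2 : r ^ 2 = ρ ^ 2 - ‖a - c‖ ^ 2)
    (hx : x = c + σ₀ • w) (hσ₀ : |σ₀| ≤ r)
    (hq : ‖q - a‖ ≤ ρ)
    (hdist : ε ≤ infDist q (segment ℝ (c - r • w) (c + r • w))) :
    ε ^ 2 * ‖x - q‖ ^ 2 ≤ 8 * ρ ^ 2 * (‖x - q‖ ^ 2 - ⟪w, x - q⟫ ^ 2) := by
  set d := ‖a - c‖ with hdd
  have hd0 : 0 ≤ d := norm_nonneg _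
  have hdρ : d ≤ ρ := by
    have h1 : d ^ 2 ≤ ρ ^ 2 := by linarith [sq_nonneg r]
    exact (abs_le_of_sq_le_sq' h1 hρ.le).2
  set s := ⟪w, q - c⟫ with hs
  set β := q - c - s • w with hβ
  have hww : ⟪w, w⟫ = 1 := by
    rw [real_inner_self_eq_norm_sq, hw]; norm_num
  have hβw : ⟪w, β⟫ = 0 := by
    rw [hβ, inner_sub_right, real_inner_smul_right, hww]; simp [hs]
  set e := ‖β‖ with he
  have he0 : 0 ≤ e := norm_nonneg _
  have hxq : x - q = (σ₀ - s) • w + -β := by rw [hx, hβ]; module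
  have hxq2 : ‖x - q‖ ^ 2 = (σ₀ - s) ^ 2 + e ^ 2 := by
    rw [hxq, aux_orth hw (by rw [inner_neg_right, hβw]; ring) (σ₀ - s), he, norm_neg]
  have hxqw : ⟪w, x - q⟫ = σ₀ - s := by
    rw [hxq, inner_add_right, inner_neg_right, hβw, real_inner_smul_right, hww]; ring
  rw [hxq2, hxqw]
  have hred : (σ₀ - s) ^ 2 + e ^ 2 - (σ₀ - s) ^ 2 = e ^ 2 := by ring
  rw [hred]
  -- ball constraint
  have hqa : q - a = s • w + (β - (a - c)) := by rw [hβ]; module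
  have hqa2 : ‖q - a‖ ^ 2 = s ^ 2 + ‖β - (a - c)‖ ^ 2 := by
    rw [hqa, aux_orth hw (by rw [inner_sub_right, hβw, hm]; ring) s]
  have hde : (d - e) ^ 2 ≤ ‖β - (a - c)‖ ^ 2 := by
    have h1 : |e - d| ≤ ‖β - (a - c)‖ := abs_norm_sub_norm_le _ _
    calc (d - e) ^ 2 = |e - d| ^ 2 := by rw [sq_abs]; ring
      _ ≤ ‖β - (a - c)‖ ^ 2 := pow_le_pow_left₀ (abs_nonneg _) h1 2
  have hball : s ^ 2 + (d - e) ^ 2 ≤ ρ ^ 2 := by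
    have h2 : ‖q - a‖ ^ 2 ≤ ρ ^ 2 := pow_le_pow_left₀ (norm_nonneg _) hq 2
    linarith
  have hσ₀2 : σ₀ ^ 2 ≤ r ^ 2 := by
    calc σ₀ ^ 2 = |σ₀| ^ 2 := (sq_abs _).symm
      _ ≤ r ^ 2 := pow_le_pow_left₀ (abs_nonneg _) hσ₀ 2
  have hxa : ‖x - a‖ ^ 2 = σ₀ ^ 2 + d ^ 2 := by
    have h3 : x - a = σ₀ • w + -(a - c) := by rw [hx]; module
    rw [h3, aux_orth hw (by rw [inner_neg_right, hm]; ring) σ₀, norm_neg]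
  have hxaρ : ‖x - a‖ ≤ ρ := by
    have h4 : ‖x - a‖ ^ 2 ≤ ρ ^ 2 := by linarith
    exact (abs_le_of_sq_le_sq' h4 hρ.le).2
  have h0le : ‖x - q‖ ≤ 2 * ρ := by
    calc ‖x - q‖ ≤ ‖x - a‖ + ‖a - q‖ := norm_sub_le_norm_sub_add_norm_sub x a q
      _ ≤ ρ + ρ := add_le_add hxaρ (by rwa [norm_sub_rev])
      _ = 2 * ρ := by ring
  have h0sq : (σ₀ - s) ^ 2 + e ^ 2 ≤ 4 * ρ ^ 2 := by
    rw [← hxq2]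
    calc ‖x - q‖ ^ 2 ≤ (2 * ρ) ^ 2 := pow_le_pow_left₀ (norm_nonneg _) h0le 2
      _ = 4 * ρ ^ 2 := by ring
  rcases le_or_gt (ε ^ 2) (2 * e ^ 2) with hcase | hcase
  · calc ε ^ 2 * ((σ₀ - s) ^ 2 + e ^ 2) ≤ 2 * e ^ 2 * (4 * ρ ^ 2) :=
        mul_le_mul hcase h0sq (by positivity) (by positivity)
      _ = 8 * ρ ^ 2 * e ^ 2 := by ring
  · -- beyond the chord
    have hsr : r < |s| := by
      by_contra hcon
      push_neg at hcon
      have hmem : c + s • w ∈ segment ℝ (c - r • w) (c + r • w) := aux_mem_chord hcon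
      have hle : infDist q (segment ℝ (c - r • w) (c + r • w)) ≤ dist q (c + s • w) :=
        infDist_le_dist_of_mem hmem
      have hdq : dist q (c + s • w) = e := by
        rw [dist_eq_norm, he, hβ]; congr 1; abel
      have h5 : ε ≤ e := by rw [← hdq]; exact hdist.trans hle
      have h6 : ε ^ 2 ≤ e ^ 2 := pow_le_pow_left₀ hε.le h5 2
      linarith [sq_nonneg e]
    have hg0 : 0 < |s| - r := by linarith
    set g := |s| - r with hg
    have habs2 : |s| = r + g := by rw [hg]; ring
    have hsq : s ^ 2 = (r + g) ^ 2 := by rw [← habs2, sq_abs]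
    have hs1 : -(r + g) ≤ s ∧ s ≤ r + g := abs_le.1 (le_of_eq habs2)
    have hge : ε ^ 2 ≤ g ^ 2 + e ^ 2 := by
      rcases le_or_gt 0 s with hss | hss
      · have habs : s = r + g := by rw [← abs_of_nonneg hss, habs2]
        have h3 : ε ≤ dist q (c + r • w) :=
          hdist.trans (infDist_le_dist_of_mem (right_mem_segment ℝ _ _))
        have h4 : q - (c + r • w) = (s - r) • w + β := by rw [hβ]; module
        have h5 : dist q (c + r • w) ^ 2 = (s - r) ^ 2 + e ^ 2 := by
          rw [dist_eq_norm, h4, aux_orth hw hβw]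
        have h6 : ε ^ 2 ≤ dist q (c + r • w) ^ 2 := pow_le_pow_left₀ hε.le h3 2
        rw [h5, habs] at h6
        calc ε ^ 2 ≤ (r + g - r) ^ 2 + e ^ 2 := h6
          _ = g ^ 2 + e ^ 2 := by ring
      · have habs : s = -(r + g) := by
          have h20 : |s| = -s := abs_of_neg hss
          linarith [habs2]
        have h3 : ε ≤ dist q (c - r • w) :=
          hdist.trans (infDist_le_dist_of_mem (left_mem_segment ℝ _ _))
        have h4 : q - (c - r • w) = (s + r) • w + β := by rw [hβ]; module
        have h5 : dist q (c - r • w) ^ 2 = (s + r) ^ 2 + e ^ 2 := by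
          rw [dist_eq_norm, h4, aux_orth hw hβw]
        have h6 : ε ^ 2 ≤ dist q (c - r • w) ^ 2 := pow_le_pow_left₀ hε.le h3 2
        rw [h5, habs] at h6
        calc ε ^ 2 ≤ (-(r + g) + r) ^ 2 + e ^ 2 := h6
          _ = g ^ 2 + e ^ 2 := by ring
    have hA2 : 2 * r * g + g ^ 2 ≤ 2 * d * e - e ^ 2 := by
      have hex : s ^ 2 = r ^ 2 + 2 * r * g + g ^ 2 := by rw [hsq]; ring
      have hex2 : (d - e) ^ 2 = d ^ 2 - 2 * (d * e) + e ^ 2 := by ring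
      linarith [hball, hex, hr2, hex2]
    have he2g : e ^ 2 ≤ g ^ 2 := by linarith
    have heps2g : ε ^ 2 ≤ 2 * g ^ 2 := by linarith
    have habs3 : |σ₀ - s| ≤ 2 * r + g := by
      have h7 := abs_le.1 hσ₀
      exact abs_le.2 ⟨by linarith [hs1.2], by linarith [hs1.1]⟩
    have hσs : (σ₀ - s) ^ 2 ≤ (2 * r + g) ^ 2 := by
      calc (σ₀ - s) ^ 2 = |σ₀ - s| ^ 2 := (sq_abs _).symm
        _ ≤ (2 * r + g) ^ 2 := pow_le_pow_left₀ (abs_nonneg _) habs3 2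
    have p1 : ε ^ 2 * (σ₀ - s) ^ 2 ≤ 2 * g ^ 2 * (2 * r + g) ^ 2 :=
      mul_le_mul heps2g hσs (sq_nonneg _) (by positivity)
    have p2 : g * (2 * r + g) ≤ 2 * d * e - e ^ 2 := by linarith [hA2]
    have hgr0 : (0:ℝ) ≤ g * (2 * r + g) := by
      apply mul_nonneg hg0.le; linarith
    have p3 : 2 * g ^ 2 * (2 * r + g) ^ 2 ≤ 2 * (2 * d * e - e ^ 2) ^ 2 := by
      have h8 := pow_le_pow_left₀ hgr0 p2 2
      calc 2 * g ^ 2 * (2 * r + g) ^ 2 = 2 * (g * (2 * r + g)) ^ 2 := by ring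
        _ ≤ 2 * (2 * d * e - e ^ 2) ^ 2 := by linarith
    have h10 : g ^ 2 ≤ 2 * d * e - e ^ 2 := by
      have h9 : 0 ≤ r * g := mul_nonneg hr0 hg0.le
      linarith
    have p4 : ε ^ 2 * e ^ 2 ≤ 2 * (2 * d * e - e ^ 2) * e ^ 2 := by
      have h11 : ε ^ 2 ≤ 2 * (2 * d * e - e ^ 2) := by linarith
      exact mul_le_mul_of_nonneg_right h11 (sq_nonneg e)
    have p5 : 2 * (2 * d * e - e ^ 2) ^ 2 + 2 * (2 * d * e - e ^ 2) * e ^ 2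
        ≤ 8 * ρ ^ 2 * e ^ 2 := by
      have h12 : 0 ≤ 2 * d * e - e ^ 2 := le_trans (sq_nonneg g) h10
      have h13 : d ^ 2 ≤ ρ ^ 2 := by linarith [hr2, sq_nonneg r]
      have h14 : 2 * (2 * d * e - e ^ 2) ^ 2 + 2 * (2 * d * e - e ^ 2) * e ^ 2
          = 8 * (d * e) ^ 2 - 4 * ((d * e) * e ^ 2) := by ring
      have h15 : (d * e) ^ 2 ≤ ρ ^ 2 * e ^ 2 := by
        calc (d * e) ^ 2 = d ^ 2 * e ^ 2 := by ring
          _ ≤ ρ ^ 2 * e ^ 2 := mul_le_mul_of_nonneg_right h13 (sq_nonneg e)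
      have h16 : 0 ≤ (d * e) * e ^ 2 := by positivity
      linarith
    calc ε ^ 2 * ((σ₀ - s) ^ 2 + e ^ 2) = ε ^ 2 * (σ₀ - s) ^ 2 + ε ^ 2 * e ^ 2 := by ring
      _ ≤ 8 * ρ ^ 2 * e ^ 2 := by linarith

lemma aux_strong {E : Type*} [NormedAddCommGroup E] [InnerProductSpace ℝ E]
    {u v : E} {t ρ ε : ℝ} (hρ : 0 < ρ) (hε : 0 < ε)
    (hu0 : ε ≤ ‖u‖) (hut : ε ≤ ‖u + t • v‖) (hutle : ‖u + t • v‖ ≤ 2 * ρ)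
    (hsine : ε ^ 2 * ‖u‖ ^ 2 * ‖v‖ ^ 2 ≤ 8 * ρ ^ 2 * (‖v‖ ^ 2 * ‖u‖ ^ 2 - ⟪v, u⟫ ^ 2)) :
    ‖u‖ + t * (‖u‖⁻¹ * ⟪v, u⟫) + ε ^ 2 / (32 * ρ ^ 3) * t ^ 2 * ‖v‖ ^ 2 ≤ ‖u + t • v‖ := by
  set h0 := ‖u‖ with hh0def
  set hT := ‖u + t • v‖ with hTdef
  have hh0 : 0 < h0 := lt_of_lt_of_le hε hu0
  have hT0 : 0 < hT := lt_of_lt_of_le hε hut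
  set I := ⟪u + t • v, u⟫ with hIdef
  have hIv : I = h0 ^ 2 + t * ⟪v, u⟫ := by
    rw [hIdef, inner_add_left, real_inner_smul_left, real_inner_self_eq_norm_sq, hh0def]
  have hnorm : hT ^ 2 = h0 ^ 2 + 2 * t * ⟪v, u⟫ + t ^ 2 * ‖v‖ ^ 2 := by
    rw [hTdef, norm_add_sq_real, real_inner_smul_right, norm_smul, real_inner_comm]
    simp only [Real.norm_eq_abs, mul_pow, sq_abs]
    ring
  have hGram : hT ^ 2 * h0 ^ 2 - I ^ 2 = t ^ 2 * (‖v‖ ^ 2 * h0 ^ 2 - ⟪v, u⟫ ^ 2) := by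
    rw [hIv, hnorm]; ring
  have key1 : hT ^ 2 * h0 ^ 2 - I ^ 2 ≤ 2 * (hT * h0) * (hT * h0 - I) := by
    have := sq_nonneg (hT * h0 - I)
    linarith
  have key1b : 8 * ρ ^ 2 * (hT ^ 2 * h0 ^ 2 - I ^ 2) ≤
      8 * ρ ^ 2 * (2 * (hT * h0) * (hT * h0 - I)) :=
    mul_le_mul_of_nonneg_left key1 (by positivity)
  have c2 : t ^ 2 * (ε ^ 2 * h0 ^ 2 * ‖v‖ ^ 2) ≤
      t ^ 2 * (8 * ρ ^ 2 * (‖v‖ ^ 2 * h0 ^ 2 - ⟪v, u⟫ ^ 2)) :=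
    mul_le_mul_of_nonneg_left hsine (sq_nonneg t)
  set Δ := hT - h0 - t * (h0⁻¹ * ⟪v, u⟫) with hΔdef
  have hΔeq : h0 * Δ = hT * h0 - I := by
    rw [hΔdef, hIv]
    field_simp
    ring
  have hstep : t ^ 2 * (ε ^ 2 * ‖v‖ ^ 2) * h0 ^ 2 ≤ 16 * ρ ^ 2 * hT * Δ * h0 ^ 2 := by
    have e4 : 16 * ρ ^ 2 * hT * Δ * h0 ^ 2 = 8 * ρ ^ 2 * (2 * (hT * h0) * (h0 * Δ)) := by
      ring
    rw [e4, hΔeq]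
    have e5 : 8 * ρ ^ 2 * (hT ^ 2 * h0 ^ 2 - I ^ 2)
        = t ^ 2 * (8 * ρ ^ 2 * (‖v‖ ^ 2 * h0 ^ 2 - ⟪v, u⟫ ^ 2)) := by rw [hGram]; ring
    have e6 : t ^ 2 * (ε ^ 2 * ‖v‖ ^ 2) * h0 ^ 2 = t ^ 2 * (ε ^ 2 * h0 ^ 2 * ‖v‖ ^ 2) := by
      ring
    linarith
  have hmain : t ^ 2 * (ε ^ 2 * ‖v‖ ^ 2) ≤ 16 * ρ ^ 2 * hT * Δ :=
    le_of_mul_le_mul_right hstep (by positivity)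
  have hΔ0 : 0 ≤ Δ := by
    by_contra hneg
    push_neg at hneg
    have h1 : (0:ℝ) < 16 * ρ ^ 2 * hT := by positivity
    have h2 : 16 * ρ ^ 2 * hT * Δ < 0 := mul_neg_of_pos_of_neg h1 hneg
    have h3 : 0 ≤ t ^ 2 * (ε ^ 2 * ‖v‖ ^ 2) := by positivity
    linarith
  have hup : 16 * ρ ^ 2 * hT * Δ ≤ 32 * ρ ^ 3 * Δ := by
    have h4 : 16 * ρ ^ 2 * hT ≤ 32 * ρ ^ 3 := by
      have := mul_le_mul_of_nonneg_left hutle (by positivity : (0:ℝ) ≤ 16 * ρ ^ 2)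
      linarith
    exact mul_le_mul_of_nonneg_right h4 hΔ0
  have hfin : ε ^ 2 / (32 * ρ ^ 3) * t ^ 2 * ‖v‖ ^ 2 ≤ Δ := by
    rw [div_mul_eq_mul_div, div_mul_eq_mul_div, div_le_iff₀ (by positivity : (0:ℝ) < 32 * ρ ^ 3)]
    calc ε ^ 2 * t ^ 2 * ‖v‖ ^ 2 = t ^ 2 * (ε ^ 2 * ‖v‖ ^ 2) := by ring
      _ ≤ 32 * ρ ^ 3 * Δ := le_trans hmain hup
      _ = Δ * (32 * ρ ^ 3) := by ring
  rw [hΔdef] at hfin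
  linarith

/-- Euclidean case of Theorem 3.6, strong convexity of `f`.
If `ε ∈ (0,ρ)`, `η ∈ (0,1]` are such that every `ε`-neighborhood of a segment with
endpoints in `B̄(a,ρ)` has measure at most `1 - η`, and `τ = ε²η/(32ρ³)`, then along
every segment in `B̄(a,ρ)` one has
`f(x + t(y-x)) ≥ f(x) + t·(⟪y-x, H x⟫ + μ{x}‖y-x‖) + τ t² ‖y-x‖²`,
and consequently `x ↦ f(x) - τ‖x‖²` is convex on `B̄(a,ρ)`. -/
theorem stmt10 {n : ℕ} (hn : 1 ≤ n) (a : EuclideanSpace ℝ (Fin n)) (ρ : ℝ) (hρ : 0 < ρ)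
    (μ : Measure (EuclideanSpace ℝ (Fin n))) [IsProbabilityMeasure μ]
    (hsupp : {x : EuclideanSpace ℝ (Fin n) | ∀ U ∈ nhds x, 0 < μ U} ⊆ ball a ρ)
    (f : EuclideanSpace ℝ (Fin n) → ℝ)
    (hf : ∀ x, f x = ∫ p, ‖x - p‖ ∂μ)
    (H : EuclideanSpace ℝ (Fin n) → EuclideanSpace ℝ (Fin n))
    (hH : ∀ x, H x = ∫ p in ({x}ᶜ : Set (EuclideanSpace ℝ (Fin n))), ‖x - p‖⁻¹ • (x - p) ∂μ)
    (ε η : ℝ) (hε : ε ∈ Set.Ioo 0 ρ) (hη : η ∈ Set.Ioc (0 : ℝ) 1)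
    (hεη : ∀ x ∈ closedBall a ρ, ∀ y ∈ closedBall a ρ,
      μ {z | infDist z (segment ℝ x y) < ε} ≤ ENNReal.ofReal (1 - η))
    (τ : ℝ) (hτ : τ = ε ^ 2 * η / (32 * ρ ^ 3)) :
    (∀ x ∈ closedBall a ρ, ∀ y ∈ closedBall a ρ, ∀ t ∈ Set.Icc (0 : ℝ) 1,
      f (x + t • (y - x)) ≥
        f x + t * (⟪y - x, H x⟫ + (μ {x}).toReal * ‖y - x‖) + τ * t ^ 2 * ‖y - x‖ ^ 2) ∧
    ConvexOn ℝ (closedBall a ρ) (fun x => f x - τ * ‖x‖ ^ 2) := by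
  obtain ⟨hε0, hερ⟩ := hε
  obtain ⟨hη0, hη1⟩ := hη
  have hτ0 : 0 ≤ τ := by rw [hτ]; positivity
  have hball0 : μ (ball a ρ)ᶜ = 0 := aux_compl_null μ hsupp
  have haeball : ∀ᵐ q ∂μ, q ∈ ball a ρ := by
    rw [ae_iff]
    exact hball0
  have key : ∀ x ∈ closedBall a ρ, ∀ y ∈ closedBall a ρ, ∀ t ∈ Set.Icc (0:ℝ) 1,
      f x + t * (⟪y - x, H x⟫ + (μ {x}).toReal * ‖y - x‖) + τ * t ^ 2 * ‖y - x‖ ^ 2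
        ≤ f (x + t • (y - x)) := by
    intro x hx y hy t ht
    obtain ⟨ht0, ht1⟩ := ht
    by_cases hxy : y = x
    · subst hxy
      simp only [sub_self, smul_zero, add_zero, inner_zero_left, norm_zero, mul_zero,
        zero_add, zero_pow, ne_eq, OfNat.ofNat_ne_zero, not_false_eq_true]
      norm_num
    have hv : y - x ≠ 0 := sub_ne_zero.2 hxy
    set v := y - x with hvdef
    set nv := ‖v‖ with hnvdef
    have hnv0 : 0 < nv := norm_pos_iff.2 hv
    set w : EuclideanSpace ℝ (Fin n) := nv⁻¹ • v with hwdef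
    have hw : ‖w‖ = 1 := norm_smul_inv_norm hv
    have hvw : v = nv • w := by
      rw [hwdef, smul_smul, mul_inv_cancel₀ hnv0.ne', one_smul]
    have hww : ⟪w, w⟫ = 1 := by rw [real_inner_self_eq_norm_sq, hw]; norm_num
    set c := x + ⟪w, a - x⟫ • w with hcdef
    have hacm : a - c = (a - x) - ⟪w, a - x⟫ • w := by rw [hcdef]; module
    have hm : ⟪w, a - c⟫ = 0 := by
      rw [hacm, inner_sub_right, real_inner_smul_right, hww]; ring
    set d := ‖a - c‖ with hddef
    have hxa : ‖a - x‖ ≤ ρ := by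
      rw [norm_sub_rev, ← dist_eq_norm]; exact mem_closedBall.1 hx
    have hdec : a - x = ⟪w, a - x⟫ • w + (a - c) := by rw [hacm]; module
    have hax2 : ‖a - x‖ ^ 2 = ⟪w, a - x⟫ ^ 2 + d ^ 2 := by
      conv_lhs => rw [hdec]
      rw [aux_orth hw hm]
    have hdρ2 : d ^ 2 ≤ ρ ^ 2 := by
      have h1 : ‖a - x‖ ^ 2 ≤ ρ ^ 2 := pow_le_pow_left₀ (norm_nonneg _) hxa 2
      nlinarith [sq_nonneg ⟪w, a - x⟫]
    set r := Real.sqrt (ρ ^ 2 - d ^ 2) with hrdef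
    have hr0 : 0 ≤ r := Real.sqrt_nonneg _
    have hr2 : r ^ 2 = ρ ^ 2 - d ^ 2 := Real.sq_sqrt (by linarith)
    set x' := c - r • w with hx'def
    set y' := c + r • w with hy'def
    have hx'b : x' ∈ closedBall a ρ := by
      have h1 : x' - a = (-r) • w + -(a - c) := by rw [hx'def]; module
      have h2 : ‖x' - a‖ ^ 2 = r ^ 2 + d ^ 2 := by
        rw [h1, aux_orth hw (by rw [inner_neg_right, hm]; ring), norm_neg, neg_pow]
        ring
      have h3 : ‖x' - a‖ ^ 2 ≤ ρ ^ 2 := by rw [h2, hr2]; linarith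
      rw [mem_closedBall, dist_eq_norm]
      exact (abs_le_of_sq_le_sq' h3 hρ.le).2
    have hy'b : y' ∈ closedBall a ρ := by
      have h1 : y' - a = r • w + -(a - c) := by rw [hy'def]; module
      have h2 : ‖y' - a‖ ^ 2 = r ^ 2 + d ^ 2 := by
        rw [h1, aux_orth hw (by rw [inner_neg_right, hm]; ring), norm_neg]
      have h3 : ‖y' - a‖ ^ 2 ≤ ρ ^ 2 := by rw [h2, hr2]; linarith
      rw [mem_closedBall, dist_eq_norm]
      exact (abs_le_of_sq_le_sq' h3 hρ.le).2
    set σ₀ := -⟪w, a - x⟫ with hσ₀def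
    have hxc0 : x - c = σ₀ • w := by rw [hσ₀def, hcdef]; module
    have hxc : x = c + σ₀ • w := by rw [← hxc0]; abel
    have hσ₀2 : σ₀ ^ 2 ≤ r ^ 2 := by
      have h1 : ‖a - x‖ ^ 2 ≤ ρ ^ 2 := pow_le_pow_left₀ (norm_nonneg _) hxa 2
      have h2 : σ₀ ^ 2 = ⟪w, a - x⟫ ^ 2 := by rw [hσ₀def]; ring
      linarith [hax2, hr2]
    have hσ₀r : |σ₀| ≤ r := by
      exact abs_le.2 (abs_le_of_sq_le_sq' hσ₀2 hr0)
    -- y-coordinate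
    set σ₁ := σ₀ + nv with hσ₁def
    have hyc : y = c + σ₁ • w := by
      have : y = x + v := by rw [hvdef]; abel
      rw [this, hxc, hvw, hσ₁def, add_smul]; module
    have hσ₁r : |σ₁| ≤ r := by
      have h1 : ‖a - y‖ ≤ ρ := by
        rw [norm_sub_rev, ← dist_eq_norm]; exact mem_closedBall.1 hy
      have h2 : a - y = (-σ₁) • w + (a - c) := by rw [hyc]; module
      have h3 : ‖a - y‖ ^ 2 = σ₁ ^ 2 + d ^ 2 := by
        rw [h2, aux_orth hw hm, neg_pow]; ring
      have h4 : ‖a - y‖ ^ 2 ≤ ρ ^ 2 := pow_le_pow_left₀ (norm_nonneg _) h1 2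
      have h5 : σ₁ ^ 2 ≤ r ^ 2 := by linarith [hr2]
      exact abs_le.2 (abs_le_of_sq_le_sq' (by rw [hr2]; linarith) hr0)
    set z := x + t • v with hzdef
    have hzc : z = c + (σ₀ + t * nv) • w := by
      rw [hzdef, hxc, hvw, smul_smul, add_smul]; module
    have hσtr : |σ₀ + t * nv| ≤ r := by
      have h1 := abs_le.1 hσ₀r
      have h2 := abs_le.1 hσ₁r
      have h3 : 0 ≤ t * nv := mul_nonneg ht0 hnv0.le
      have h4 : t * nv ≤ nv := by
        have := mul_le_mul_of_nonneg_right ht1 hnv0.le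
        linarith
      rw [hσ₁def] at h2
      exact abs_le.2 ⟨by linarith, by linarith⟩
    have hxC : x ∈ segment ℝ x' y' := by
      rw [hxc, hx'def, hy'def]; exact aux_mem_chord hσ₀r
    have hzC : z ∈ segment ℝ x' y' := by
      rw [hzc, hx'def, hy'def]; exact aux_mem_chord hσtr
    have hCsub : segment ℝ x' y' ⊆ closedBall a ρ :=
      (convex_closedBall a ρ).segment_subset hx'b hy'b
    -- the good set G
    set S := {p : EuclideanSpace ℝ (Fin n) | infDist p (segment ℝ x' y') < ε} with hSdef
    have hSopen : IsOpen S := isOpen_lt (continuous_infDist_pt _) continuous_const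
    set G := Sᶜ ∩ ball a ρ with hGdef
    have hGm : MeasurableSet G := hSopen.measurableSet.compl.inter measurableSet_ball
    have hμGc : μ Gᶜ ≤ ENNReal.ofReal (1 - η) := by
      have h1 : Gᶜ = S ∪ (ball a ρ)ᶜ := by rw [hGdef, compl_inter, compl_compl]
      rw [h1]
      calc μ (S ∪ (ball a ρ)ᶜ) ≤ μ S + μ (ball a ρ)ᶜ := measure_union_le _ _
        _ = μ S := by rw [hball0, add_zero]
        _ ≤ ENNReal.ofReal (1 - η) := hεη x' hx'b y' hy'b
    have hμG : ENNReal.ofReal η ≤ μ G := by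
      have hsum : μ G + μ Gᶜ = 1 := by
        rw [measure_add_measure_compl hGm]; exact measure_univ
      have h2 : (1:ℝ≥0∞) - μ Gᶜ ≤ μ G := by
        rw [← hsum, ENNReal.add_sub_cancel_right (measure_ne_top μ Gᶜ)]
      have h3 : (1:ℝ≥0∞) - ENNReal.ofReal (1 - η) = ENNReal.ofReal η := by
        rw [← ENNReal.ofReal_one, ← ENNReal.ofReal_sub _ (by linarith : (0:ℝ) ≤ 1 - η)]
        norm_num
      calc ENNReal.ofReal η = 1 - ENNReal.ofReal (1 - η) := h3.symm
        _ ≤ 1 - μ Gᶜ := tsub_le_tsub_left hμGc 1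
        _ ≤ μ G := h2
    have hηG : η ≤ (μ G).toReal := by
      have := ENNReal.toReal_mono (measure_ne_top μ G) hμG
      rwa [ENNReal.toReal_ofReal hη0.le] at this
    -- constants
    set κ := ε ^ 2 / (32 * ρ ^ 3) with hκdef
    have hκ0 : 0 ≤ κ := by positivity
    -- the comparison function
    set Dq : EuclideanSpace ℝ (Fin n) → ℝ := fun q => ⟪v, ‖x - q‖⁻¹ • (x - q)⟫ with hDqdef
    set φ : EuclideanSpace ℝ (Fin n) → ℝ := fun q =>
      ‖x - q‖ + t * Dq q + (t * nv) * Set.indicator {x} (fun _ => (1:ℝ)) q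
        + (κ * t ^ 2 * nv ^ 2) * Set.indicator G (fun _ => (1:ℝ)) q with hφdef
    -- pointwise bound
    have hzball : z ∈ closedBall a ρ := hCsub hzC
    have hpoint : ∀ q ∈ ball a ρ, φ q ≤ ‖z - q‖ := by
      intro q hq
      by_cases hqx : q = x
      · subst hqx
        have hxG : q ∉ G := by
          intro hmem
          have h5 : infDist q (segment ℝ x' y') = 0 := infDist_zero_of_mem hxC
          exact hmem.1 (by rw [hSdef]; exact mem_setOf.2 (by rw [h5]; exact hε0))
        have h6 : Dq q = 0 := by
          rw [hDqdef]; simp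
        have h7 : φ q = t * nv := by
          simp only [hφdef]
          simp [h6, indicator_of_mem (mem_singleton q), indicator_of_notMem hxG]
        rw [h7, hzdef]
        have h8 : q + t • v - q = t • v := by abel
        rw [h8, norm_smul, Real.norm_eq_abs, abs_of_nonneg ht0, ← hnvdef]
      · have hxq0 : x - q ≠ 0 := sub_ne_zero.2 fun h : x = q => hqx h.symm
        have hnxq : 0 < ‖x - q‖ := norm_pos_iff.2 hxq0
        have hqind : Set.indicator {x} (fun _ => (1:ℝ)) q = 0 :=
          indicator_of_notMem (by simpa using hqx) _
        have hzq : z - q = (x - q) + t • v := by rw [hzdef]; abel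
        have hDval : Dq q = ‖x - q‖⁻¹ * ⟪v, x - q⟫ := by
          simp only [hDqdef]
          rw [real_inner_smul_right]
        by_cases hqG : q ∈ G
        · -- strong case
          have hqball : q ∈ ball a ρ := hqG.2
          have hqdist : ε ≤ infDist q (segment ℝ x' y') := not_lt.1 hqG.1
          have hqa : ‖q - a‖ ≤ ρ := by
            rw [← dist_eq_norm]; exact (mem_ball.1 hqball).le
          have hqdist' : ε ≤ infDist q (segment ℝ (c - r • w) (c + r • w)) := by
            rw [hx'def, hy'def] at hqdist; exact hqdist
          have hsine0 := aux_sine hρ hε0 hερ.le hw hm hr0 (by rw [hr2, hddef]) hxc hσ₀r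
            hqa hqdist'
          have hvin : ⟪v, x - q⟫ = nv * ⟪w, x - q⟫ := by
            rw [hvw, real_inner_smul_left]
          have hsine : ε ^ 2 * ‖x - q‖ ^ 2 * nv ^ 2
              ≤ 8 * ρ ^ 2 * (nv ^ 2 * ‖x - q‖ ^ 2 - ⟪v, x - q⟫ ^ 2) := by
            have h1 := mul_le_mul_of_nonneg_right hsine0 (sq_nonneg nv)
            have h2 : 8 * ρ ^ 2 * (nv ^ 2 * ‖x - q‖ ^ 2 - ⟪v, x - q⟫ ^ 2)
                = (8 * ρ ^ 2 * (‖x - q‖ ^ 2 - ⟪w, x - q⟫ ^ 2)) * nv ^ 2 := by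
              rw [hvin]; ring
            rw [h2]
            calc ε ^ 2 * ‖x - q‖ ^ 2 * nv ^ 2 = ε ^ 2 * ‖x - q‖ ^ 2 * nv ^ 2 := rfl
              _ ≤ _ := h1
          have hu0 : ε ≤ ‖x - q‖ := by
            have h1 : infDist q (segment ℝ x' y') ≤ dist q x := infDist_le_dist_of_mem hxC
            rw [dist_eq_norm, norm_sub_rev] at h1
            linarith
          have hut : ε ≤ ‖(x - q) + t • v‖ := by
            have h1 : infDist q (segment ℝ x' y') ≤ dist q z := infDist_le_dist_of_mem hzC
            rw [dist_eq_norm, norm_sub_rev] at h1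
            rw [← hzq]; linarith
          have hutle : ‖(x - q) + t • v‖ ≤ 2 * ρ := by
            rw [← hzq]
            calc ‖z - q‖ ≤ ‖z - a‖ + ‖a - q‖ := norm_sub_le_norm_sub_add_norm_sub z a q
              _ ≤ ρ + ρ := add_le_add
                  (by rw [← dist_eq_norm]; exact mem_closedBall.1 hzball)
                  (by rw [norm_sub_rev]; exact hqa)
              _ = 2 * ρ := by ring
          have hstrong := aux_strong hρ hε0 hu0 hut hutle hsine
          have hφq : φ q = ‖x - q‖ + t * (‖x - q‖⁻¹ * ⟪v, x - q⟫) + κ * t ^ 2 * nv ^ 2 := by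
            simp only [hφdef, hqind, mul_zero, add_zero, indicator_of_mem hqG, mul_one]
            rw [hDval]
          rw [hφq, hzq, hκdef]
          exact hstrong
        · -- plain convexity case
          have hqGind : Set.indicator G (fun _ => (1:ℝ)) q = 0 := indicator_of_notMem hqG _
          have hφq : φ q = ‖x - q‖ + t * (‖x - q‖⁻¹ * ⟪v, x - q⟫) := by
            simp only [hφdef, hqind, hqGind, mul_zero, add_zero]
            rw [hDval]
          rw [hφq, hzq]
          have h7 := real_inner_le_norm ((x - q) + t • v) (x - q)
          have h8 : ⟪(x - q) + t • v, x - q⟫ = ‖x - q‖ ^ 2 + t * ⟪v, x - q⟫ := by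
            rw [inner_add_left, real_inner_smul_left, real_inner_self_eq_norm_sq]
          have h9 : ‖x - q‖ * (‖x - q‖ + t * (‖x - q‖⁻¹ * ⟪v, x - q⟫))
              = ‖x - q‖ ^ 2 + t * ⟪v, x - q⟫ := by
            field_simp
          have h10 : ‖x - q‖ * (‖x - q‖ + t * (‖x - q‖⁻¹ * ⟪v, x - q⟫))
              ≤ ‖x - q‖ * ‖(x - q) + t • v‖ := by
            rw [h9, ← h8]
            calc ⟪(x - q) + t • v, x - q⟫ ≤ ‖(x - q) + t • v‖ * ‖x - q‖ := h7
              _ = ‖x - q‖ * ‖(x - q) + t • v‖ := by ring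
          exact le_of_mul_le_mul_left h10 hnxq
    -- integrability
    have hunit : ∀ q : EuclideanSpace ℝ (Fin n), ‖‖x - q‖⁻¹ • (x - q)‖ ≤ 1 := by
      intro q
      rcases eq_or_ne (x - q) 0 with h | h
      · rw [h]; simp
      · rw [norm_smul, norm_inv, norm_norm, inv_mul_cancel₀ (norm_ne_zero_iff.2 h)]
    have hmeasu : Measurable fun q : EuclideanSpace ℝ (Fin n) => ‖x - q‖⁻¹ • (x - q) :=
      ((measurable_const.sub measurable_id).norm.inv).smul (measurable_const.sub measurable_id)
    have hi1 : Integrable (fun q => ‖z - q‖) μ := by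
      refine Integrable.mono' (integrable_const (2 * ρ))
        ((measurable_const.sub measurable_id).norm.aestronglyMeasurable) ?_
      filter_upwards [haeball] with q hq
      rw [norm_norm]
      calc ‖z - q‖ ≤ ‖z - a‖ + ‖a - q‖ := norm_sub_le_norm_sub_add_norm_sub z a q
        _ ≤ ρ + ρ := add_le_add
            (by rw [← dist_eq_norm]; exact mem_closedBall.1 hzball)
            (by rw [norm_sub_rev, ← dist_eq_norm]; exact (mem_ball.1 hq).le)
        _ = 2 * ρ := by ring
    have hi2 : Integrable (fun q => ‖x - q‖) μ := by
      refine Integrable.mono' (integrable_const (2 * ρ))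
        ((measurable_const.sub measurable_id).norm.aestronglyMeasurable) ?_
      filter_upwards [haeball] with q hq
      rw [norm_norm]
      calc ‖x - q‖ ≤ ‖x - a‖ + ‖a - q‖ := norm_sub_le_norm_sub_add_norm_sub x a q
        _ ≤ ρ + ρ := add_le_add
            (by rw [← dist_eq_norm]; exact mem_closedBall.1 hx)
            (by rw [norm_sub_rev, ← dist_eq_norm]; exact (mem_ball.1 hq).le)
        _ = 2 * ρ := by ring
    have hmeasD : Measurable Dq := by
      simp only [hDqdef]
      exact Measurable.inner measurable_const hmeasu
    have hDbound : ∀ q, ‖Dq q‖ ≤ nv := by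
      intro q
      have h2 : |⟪v, ‖x - q‖⁻¹ • (x - q)⟫| ≤ ‖v‖ * ‖‖x - q‖⁻¹ • (x - q)‖ :=
        abs_real_inner_le_norm _ _
      have h3 : ‖v‖ * ‖‖x - q‖⁻¹ • (x - q)‖ ≤ ‖v‖ * 1 :=
        mul_le_mul_of_nonneg_left (hunit q) (norm_nonneg v)
      calc ‖Dq q‖ = |⟪v, ‖x - q‖⁻¹ • (x - q)⟫| := by simp only [hDqdef, Real.norm_eq_abs]
        _ ≤ ‖v‖ * 1 := le_trans h2 h3
        _ = nv := by rw [mul_one]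
    have hi3 : Integrable Dq μ :=
      Integrable.mono' (integrable_const nv) hmeasD.aestronglyMeasurable
        (Filter.Eventually.of_forall hDbound)
    have hi4 : Integrable (Set.indicator {x} fun _ => (1:ℝ)) μ :=
      (integrable_const 1).indicator (measurableSet_singleton x)
    have hi5 : Integrable (Set.indicator G fun _ => (1:ℝ)) μ :=
      (integrable_const 1).indicator hGm
    have hiφ : Integrable φ μ := by
      simp only [hφdef]
      exact ((hi2.add (hi3.const_mul t)).add (hi4.const_mul (t * nv))).add
        (hi5.const_mul (κ * t ^ 2 * nv ^ 2))
    have hle : ∫ q, φ q ∂μ ≤ ∫ q, ‖z - q‖ ∂μ :=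
      integral_mono_ae hiφ hi1 (by filter_upwards [haeball] with q hq using hpoint q hq)
    -- compute the integral of φ
    have hDint : ∫ q, Dq q ∂μ = ⟪v, H x⟫ := by
      have hres : Integrable (fun q => ‖x - q‖⁻¹ • (x - q)) (μ.restrict {x}ᶜ) := by
        refine Integrable.mono' (integrable_const 1) hmeasu.aestronglyMeasurable ?_
        exact Filter.Eventually.of_forall hunit
      have h1 : Dq = Set.indicator ({x}ᶜ : Set (EuclideanSpace ℝ (Fin n))) Dq := by
        funext q
        by_cases hqx : q = x
        · subst hqx
          rw [indicator_of_notMem (by simp)]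
          simp only [hDqdef]
          simp
        · rw [indicator_of_mem (by simpa using hqx)]
      conv_lhs => rw [h1]
      rw [integral_indicator (measurableSet_singleton x).compl, hH x]
      simp only [hDqdef]
      exact integral_inner hres v
    have hIind1 : ∫ q, Set.indicator {x} (fun _ => (1:ℝ)) q ∂μ = (μ {x}).toReal := by
      rw [integral_indicator_const (1:ℝ) (measurableSet_singleton x)]
      simp [Measure.real]
    have hIind2 : ∫ q, Set.indicator G (fun _ => (1:ℝ)) q ∂μ = (μ G).toReal := by
      rw [integral_indicator_const (1:ℝ) hGm]
      simp [Measure.real]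
    have hφint : ∫ q, φ q ∂μ
        = f x + t * ⟪v, H x⟫ + (t * nv) * (μ {x}).toReal
          + (κ * t ^ 2 * nv ^ 2) * (μ G).toReal := by
      simp only [hφdef]
      have hiB : Integrable (fun q => ‖x - q‖ + t * Dq q) μ := hi2.add (hi3.const_mul t)
      have hiC : Integrable (fun q => ‖x - q‖ + t * Dq q
          + (t * nv) * Set.indicator {x} (fun _ => (1:ℝ)) q) μ := hiB.add (hi4.const_mul (t * nv))
      have hiD : Integrable (fun q => t * Dq q) μ := hi3.const_mul t
      have hiE : Integrable (fun q => (t * nv) * Set.indicator {x} (fun _ => (1:ℝ)) q) μ :=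
        hi4.const_mul (t * nv)
      have hiF : Integrable (fun q => (κ * t ^ 2 * nv ^ 2) * Set.indicator G (fun _ => (1:ℝ)) q) μ :=
        hi5.const_mul (κ * t ^ 2 * nv ^ 2)
      rw [integral_add hiC hiF, integral_add hiB hiE, integral_add hi2 hiD]
      rw [integral_const_mul, integral_const_mul, integral_const_mul]
      rw [hDint, hIind1, hIind2, ← hf x]
    have hfz : f z = ∫ q, ‖z - q‖ ∂μ := hf z
    rw [hfz]
    have hτκ : τ = κ * η := by rw [hτ, hκdef]; ring
    have hμGκ : (κ * t ^ 2 * nv ^ 2) * η ≤ (κ * t ^ 2 * nv ^ 2) * (μ G).toReal :=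
      mul_le_mul_of_nonneg_left hηG (by positivity)
    have hfinal : f x + t * (⟪v, H x⟫ + (μ {x}).toReal * nv) + τ * t ^ 2 * nv ^ 2
        ≤ ∫ q, φ q ∂μ := by
      rw [hφint]
      have e1 : τ * t ^ 2 * nv ^ 2 = (κ * t ^ 2 * nv ^ 2) * η := by rw [hτκ]; ring
      rw [e1]
      linarith [hμGκ]
    linarith [hle, hfinal]
  refine ⟨fun x hx y hy t ht => key x hx y hy t ht, ?_⟩
  refine ⟨convex_closedBall a ρ, ?_⟩
  intro x hx y hy sa tb hsa htb hst
  simp only [smul_eq_mul]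
  set z := sa • x + tb • y with hzdef
  have hzball : z ∈ closedBall a ρ := (convex_closedBall a ρ) hx hy hsa htb hst
  have h1 := key z hzball x hx 1 ⟨zero_le_one, le_rfl⟩
  have h2 := key z hzball y hy 1 ⟨zero_le_one, le_rfl⟩
  rw [one_smul] at h1 h2
  rw [show z + (x - z) = x from by abel] at h1
  rw [show z + (y - z) = y from by abel] at h2
  simp only [one_pow, mul_one, one_mul] at h1 h2
  have hxz : x - z = tb • (x - y) := by
    rw [hzdef, show sa = 1 - tb from by linarith]; module
  have hyz : y - z = sa • (y - x) := by
    rw [hzdef, show tb = 1 - sa from by linarith]; module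
  have hnxz : ‖x - z‖ ^ 2 = tb ^ 2 * ‖x - y‖ ^ 2 := by
    rw [hxz, norm_smul, Real.norm_eq_abs, mul_pow, sq_abs]
  have hnyz : ‖y - z‖ ^ 2 = sa ^ 2 * ‖x - y‖ ^ 2 := by
    rw [hyz, norm_smul, Real.norm_eq_abs, mul_pow, sq_abs, norm_sub_rev]
  rw [hnxz] at h1
  rw [hnyz] at h2
  have h1' := mul_le_mul_of_nonneg_left h1 hsa
  have h2' := mul_le_mul_of_nonneg_left h2 htb
  have hcomb : sa • (x - z) + tb • (y - z) = 0 := by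
    calc sa • (x - z) + tb • (y - z) = (sa • x + tb • y) - (sa + tb) • z := by module
      _ = z - (1:ℝ) • z := by rw [hst, ← hzdef]
      _ = 0 := by rw [one_smul, sub_self]
  have hinner : sa * ⟪x - z, H z⟫ + tb * ⟪y - z, H z⟫ = 0 := by
    have h3 : ⟪sa • (x - z) + tb • (y - z), H z⟫ = (0:ℝ) := by rw [hcomb, inner_zero_left]
    rwa [inner_add_left, real_inner_smul_left, real_inner_smul_left] at h3
  have hpos1 : 0 ≤ sa * ((μ {z}).toReal * ‖x - z‖) := by positivity
  have hpos2 : 0 ≤ tb * ((μ {z}).toReal * ‖y - z‖) := by positivity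
  have hA : f z + τ * (sa * tb) * ‖x - y‖ ^ 2 ≤ sa * f x + tb * f y := by
    have e7 : sa * f z + tb * f z = f z := by rw [← add_mul, hst, one_mul]
    have e8 : τ * (sa * (tb ^ 2 * ‖x - y‖ ^ 2)) + τ * (tb * (sa ^ 2 * ‖x - y‖ ^ 2))
        = τ * (sa * tb) * ‖x - y‖ ^ 2 := by
      linear_combination (τ * sa * tb * ‖x - y‖ ^ 2) * hst
    linarith [h1', h2', hinner, hpos1, hpos2, e7, e8]
  have hpar : sa * ‖x‖ ^ 2 + tb * ‖y‖ ^ 2 - ‖z‖ ^ 2 = sa * tb * ‖x - y‖ ^ 2 := by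
    have e1 : ‖z‖ ^ 2 = sa ^ 2 * ‖x‖ ^ 2 + 2 * (sa * tb) * ⟪x, y⟫ + tb ^ 2 * ‖y‖ ^ 2 := by
      rw [hzdef, norm_add_sq_real, real_inner_smul_left, real_inner_smul_right,
        norm_smul, norm_smul, Real.norm_eq_abs, Real.norm_eq_abs, mul_pow, mul_pow,
        sq_abs, sq_abs]
      ring
    have e2 : ‖x - y‖ ^ 2 = ‖x‖ ^ 2 - 2 * ⟪x, y⟫ + ‖y‖ ^ 2 := by
      rw [norm_sub_sq_real]
    have hsa' : sa = 1 - tb := by linarith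
    rw [e1, e2, hsa']; ring
  have hparτ : τ * (sa * ‖x‖ ^ 2 + tb * ‖y‖ ^ 2) = τ * ‖z‖ ^ 2 + τ * (sa * tb) * ‖x - y‖ ^ 2 := by
    linear_combination τ * hpar
  linarith [hA, hparτ]
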